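/- Let r ∈ ℕ, let f_0 be a Schwartz function on ℝ⁺, set f(s) = s^r f_0(s), and for t > 0 define g_t(s) = f(t² s(s+1)). Then for every i ∈ ℕ there exists a constant C_i, independent of t, such that for all t > 0 and all s ≥ 1: |∂_s^i ( g_t(s)² )| ≤ C_i · t^{4r} · s^{4r − i}. -/

import Mathlib

open Real Finset

private lemma monomial_iter (m : ℕ) : ∀ j : ℕ,
    iteratedDeriv j (fun x : ℝ => x ^ m) = fun x => (m.descFactorial j : ℝ) * x ^ (m - j) := by
  intro j
  induction j with
  | zero => simp
  | succ j ih =>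
    rw [iteratedDeriv_succ, ih]
    funext x
    rw [deriv_const_mul _ (differentiable_pow (m - j) |>.differentiableAt), deriv_pow_field]
    rw [Nat.descFactorial_succ, Nat.sub_sub]
    push_cast
    ring

private lemma q_decay (f₀ : SchwartzMap ℝ ℝ) (k m : ℕ) :
    ∃ C : ℝ, 0 ≤ C ∧ ∀ u : ℝ, ‖u‖ ^ k * ‖iteratedFDeriv ℝ m (fun x => f₀ x * f₀ x) u‖ ≤ C := by
  choose C hCpos hC using fun a : ℕ => f₀.decay k a
  choose C' hC'pos hC' using fun a : ℕ => f₀.decay 0 a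
  refine ⟨∑ a ∈ Finset.range (m+1), (m.choose a : ℝ) * C a * C' (m - a),
    Finset.sum_nonneg fun a _ => by have h1 := (hCpos a).le; have h2 := (hC'pos (m-a)).le; positivity, fun u => ?_⟩
  calc ‖u‖^k * ‖iteratedFDeriv ℝ m (fun x => f₀ x * f₀ x) u‖
      ≤ ‖u‖^k * ∑ a ∈ Finset.range (m+1), (m.choose a : ℝ) * ‖iteratedFDeriv ℝ a f₀ u‖ *
          ‖iteratedFDeriv ℝ (m-a) f₀ u‖ :=
        mul_le_mul_of_nonneg_left
          (norm_iteratedFDeriv_mul_le (f₀.smooth ⊤) (f₀.smooth ⊤) u (mod_cast le_top)) (by positivity)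
    _ = ∑ a ∈ Finset.range (m+1), (m.choose a : ℝ) * (‖u‖^k * ‖iteratedFDeriv ℝ a f₀ u‖) *
          ‖iteratedFDeriv ℝ (m-a) f₀ u‖ := by
        rw [Finset.mul_sum]; apply Finset.sum_congr rfl; intros; ring
    _ ≤ _ := by
        refine Finset.sum_le_sum fun a _ => ?_
        have h1 := hC a u
        have h2 := hC' (m - a) u
        rw [pow_zero, one_mul] at h2
        have hCa := (hCpos a).le
        have hnn : (0:ℝ) ≤ (m.choose a : ℝ) * C a := by positivity
        exact mul_le_mul (mul_le_mul_of_nonneg_left h1 (by positivity)) h2 (norm_nonneg _) hnn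

private lemma derivh_bound (r : ℕ) (f₀ : SchwartzMap ℝ ℝ) (k : ℕ) :
    ∃ D : ℝ, 0 ≤ D ∧ ∀ u : ℝ, 0 < u →
      |iteratedDeriv k (fun x : ℝ => x ^ (2*r) * (f₀ x * f₀ x)) u| ≤ D * u ^ (2*(r:ℝ) - k) := by
  choose Qk hQk0 hQk using fun m : ℕ => q_decay f₀ k m
  choose Q0 hQ00 hQ0 using fun m : ℕ => q_decay f₀ 0 m
  refine ⟨∑ j ∈ Finset.range (k+1),
      (k.choose j : ℝ) * ((2*r).descFactorial j : ℝ) * (Q0 (k-j) + Qk (k-j)),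
    Finset.sum_nonneg fun j _ => by
      have h1 := hQ00 (k-j); have h2 := hQk0 (k-j); positivity,
    fun u hu => ?_⟩
  have hq : ContDiff ℝ (⊤:ℕ∞) (fun x : ℝ => f₀ x * f₀ x) := (f₀.smooth ⊤).mul (f₀.smooth ⊤)
  have hp : ContDiff ℝ (⊤:ℕ∞) (fun x : ℝ => x ^ (2*r)) := contDiff_id.pow _
  have hα : (0:ℝ) < u ^ (2*(r:ℝ) - k) := rpow_pos_of_pos hu _
  have hterm : ∀ j ∈ Finset.range (k+1),
      (k.choose j : ℝ) * ‖iteratedFDeriv ℝ j (fun x : ℝ => x ^ (2*r)) u‖ *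
        ‖iteratedFDeriv ℝ (k-j) (fun x : ℝ => f₀ x * f₀ x) u‖ ≤
      (k.choose j : ℝ) * ((2*r).descFactorial j : ℝ) * (Q0 (k-j) + Qk (k-j)) *
        u ^ (2*(r:ℝ) - k) := by
    intro j hj
    rw [Finset.mem_range, Nat.lt_succ_iff] at hj
    have hnormp : ‖iteratedFDeriv ℝ j (fun x : ℝ => x ^ (2*r)) u‖
        = ((2*r).descFactorial j : ℝ) * u ^ (2*r - j) := by
      rw [norm_iteratedFDeriv_eq_norm_iteratedDeriv, monomial_iter, Real.norm_eq_abs,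
        abs_of_nonneg (by positivity)]
    set X := ‖iteratedFDeriv ℝ (k-j) (fun x : ℝ => f₀ x * f₀ x) u‖ with hX
    have hXnn : 0 ≤ X := norm_nonneg _
    by_cases hj2r : 2*r < j
    · rw [hnormp, Nat.descFactorial_eq_zero_iff_lt.mpr hj2r]
      have h1 := hQ00 (k-j); have h2 := hQk0 (k-j)
      simp only [Nat.cast_zero, zero_mul, mul_zero]
      positivity
    · push_neg at hj2r
      have key : u ^ (2*r - j) * X ≤ (Q0 (k-j) + Qk (k-j)) * u ^ (2*(r:ℝ) - k) := by
        rcases le_total u 1 with hu1 | hu1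
        · have h1 : u ^ (2*r - j) ≤ u ^ (2*(r:ℝ) - k) := by
            rw [← rpow_natCast u (2*r - j)]
            apply rpow_le_rpow_of_exponent_ge hu hu1
            rw [Nat.cast_sub hj2r]
            have : (j:ℝ) ≤ (k:ℝ) := Nat.cast_le.mpr hj
            push_cast
            linarith
          have h2 : X ≤ Q0 (k-j) := by simpa using hQ0 (k-j) u
          calc u ^ (2*r-j) * X ≤ u ^ (2*(r:ℝ)-k) * Q0 (k-j) := mul_le_mul h1 h2 hXnn hα.le
            _ ≤ _ := by nlinarith [hQk0 (k-j), hα.le]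
        · have h1 : u ^ (2*r - j) ≤ u ^ (2*r) := pow_le_pow_right₀ hu1 (Nat.sub_le _ _)
          have hk' : u^k * X ≤ Qk (k-j) := by
            have := hQk (k-j) u
            rwa [Real.norm_eq_abs, abs_of_pos hu] at this
          have hsplit : (u:ℝ)^(2*r) = u ^ (2*(r:ℝ)-k) * u^k := by
            rw [← rpow_natCast u (2*r), ← rpow_natCast u k, ← rpow_add hu]
            congr 1
            push_cast
            ring
          calc u ^ (2*r-j) * X ≤ u ^ (2*r) * X := mul_le_mul_of_nonneg_right h1 hXnn
            _ = u ^ (2*(r:ℝ)-k) * (u^k * X) := by rw [hsplit]; ring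
            _ ≤ u ^ (2*(r:ℝ)-k) * Qk (k-j) := mul_le_mul_of_nonneg_left hk' hα.le
            _ ≤ _ := by nlinarith [hQ00 (k-j), hα.le]
      calc (k.choose j : ℝ) * ‖iteratedFDeriv ℝ j (fun x : ℝ => x ^ (2*r)) u‖ * X
          = ((k.choose j : ℝ) * ((2*r).descFactorial j : ℝ)) * (u^(2*r-j) * X) := by
            rw [hnormp]; ring
        _ ≤ ((k.choose j : ℝ) * ((2*r).descFactorial j : ℝ)) *
              ((Q0 (k-j) + Qk (k-j)) * u ^ (2*(r:ℝ)-k)) :=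
            mul_le_mul_of_nonneg_left key (by positivity)
        _ = _ := by ring
  calc |iteratedDeriv k (fun x : ℝ => x ^ (2*r) * (f₀ x * f₀ x)) u|
      = ‖iteratedFDeriv ℝ k (fun x : ℝ => x ^ (2*r) * (f₀ x * f₀ x)) u‖ := by
        rw [norm_iteratedFDeriv_eq_norm_iteratedDeriv, Real.norm_eq_abs]
    _ ≤ ∑ j ∈ Finset.range (k+1), (k.choose j : ℝ) *
          ‖iteratedFDeriv ℝ j (fun x : ℝ => x ^ (2*r)) u‖ *
          ‖iteratedFDeriv ℝ (k-j) (fun x : ℝ => f₀ x * f₀ x) u‖ :=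
        norm_iteratedFDeriv_mul_le hp hq u (mod_cast le_top)
    _ ≤ ∑ j ∈ Finset.range (k+1),
          (k.choose j : ℝ) * ((2*r).descFactorial j : ℝ) * (Q0 (k-j) + Qk (k-j)) *
            u ^ (2*(r:ℝ) - k) := Finset.sum_le_sum hterm
    _ = _ := by rw [← Finset.sum_mul]

private lemma struct (h : ℝ → ℝ) (hsm : ContDiff ℝ (⊤:ℕ∞) h) :
    ∀ i : ℕ, ∃ c : ℕ → ℝ, (∀ k, c k ≠ 0 → i ≤ 2*k ∧ k ≤ i) ∧
      ∀ t s : ℝ, iteratedDeriv i (fun s' : ℝ => h (t^2 * (s' * (s'+1)))) s =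
        ∑ k ∈ Finset.range (i+1), c k * t^(2*k) *
          ((2*s+1)^(2*k - i) * iteratedDeriv k h (t^2 * (s*(s+1)))) := by
  have hdiff : ∀ k : ℕ, Differentiable ℝ (iteratedDeriv k h) := by
    intro k
    apply hsm.differentiable_iteratedDeriv
    exact_mod_cast (WithTop.coe_lt_top k : (k:ℕ∞) < ⊤)
  intro i
  induction i with
  | zero =>
    refine ⟨fun k => if k = 0 then 1 else 0, fun k hk => ?_, fun t s => ?_⟩
    · by_cases h0 : k = 0
      · subst h0; omega
      · simp [h0] at hk
    · simp [Finset.sum_range_one]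
  | succ i ih =>
    obtain ⟨c, hc, heq⟩ := ih
    have hci1 : c (i+1) = 0 := by
      by_contra hne
      exact absurd (hc _ hne).2 (by omega)
    refine ⟨fun k => 2*((2*k - i : ℕ):ℝ) * c k + (if k = 0 then 0 else c (k-1)),
      fun k hk => ?_, fun t s => ?_⟩
    · by_cases h0 : k = 0
      · subst h0; simp at hk
      · simp only [h0, if_neg, not_false_iff] at hk
        by_cases h1 : 2*((2*k - i : ℕ):ℝ) * c k = 0
        · rw [h1, zero_add] at hk
          have := hc (k-1) hk
          omega
        · have hck : c k ≠ 0 := fun hz => by simp [hz] at h1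
          have h3 : (2*k - i : ℕ) ≠ 0 := fun hz => by simp [hz] at h1
          have h2 := hc k hck
          omega
    · rw [iteratedDeriv_succ]
      have hfe : iteratedDeriv i (fun s' : ℝ => h (t^2 * (s' * (s'+1)))) =
          fun s : ℝ => ∑ k ∈ Finset.range (i+1), c k * t^(2*k) *
            ((2*s+1)^(2*k - i) * iteratedDeriv k h (t^2 * (s*(s+1)))) := funext (heq t)
      rw [hfe]
      set u := t^2 * (s*(s+1)) with hu_def
      have hd : HasDerivAt (fun s : ℝ => ∑ k ∈ Finset.range (i+1), c k * t^(2*k) *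
          ((2*s+1)^(2*k - i) * iteratedDeriv k h (t^2 * (s*(s+1)))))
          (∑ k ∈ Finset.range (i+1), c k * t^(2*k) *
            ((↑(2*k-i) * (2*s+1)^(2*k-i-1) * 2) * iteratedDeriv k h u +
             (2*s+1)^(2*k-i) * (iteratedDeriv (k+1) h u * (t^2*(2*s+1))))) s := by
        apply HasDerivAt.fun_sum
        intro k _
        have huder : HasDerivAt (fun s : ℝ => t^2*(s*(s+1))) (t^2*(2*s+1)) s := by
          have h1 : HasDerivAt (fun s : ℝ => s*(s+1)) (2*s+1) s := by
            have h2 := (hasDerivAt_id s).fun_mul ((hasDerivAt_id s).add_const 1)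
            simp only [one_mul, mul_one, id_eq] at h2
            rw [show (2*s+1:ℝ) = s + 1 + s by ring]
            exact h2
          exact h1.const_mul _
        have hHk : HasDerivAt (iteratedDeriv k h) (iteratedDeriv (k+1) h u) u := by
          rw [iteratedDeriv_succ]
          exact (hdiff k u).hasDerivAt
        have hcomp : HasDerivAt (fun s : ℝ => iteratedDeriv k h (t^2*(s*(s+1))))
            (iteratedDeriv (k+1) h u * (t^2*(2*s+1))) s := by exact hHk.comp s huder
        have hpow : HasDerivAt (fun s : ℝ => (2*s+1)^(2*k-i))
            (↑(2*k-i) * (2*s+1)^(2*k-i-1) * 2) s := by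
          have h2 : HasDerivAt (fun s : ℝ => 2*s+1) 2 s := by
            have h3 := ((hasDerivAt_id s).const_mul 2).add_const 1
            simpa using h3
          exact h2.pow _
        exact (hpow.mul hcomp).const_mul _
      rw [hd.deriv]
      beta_reduce
      have hsplit : ∀ k ∈ Finset.range (i+1),
          c k * t^(2*k) *
            ((↑(2*k-i) * (2*s+1)^(2*k-i-1) * 2) * iteratedDeriv k h u +
             (2*s+1)^(2*k-i) * (iteratedDeriv (k+1) h u * (t^2*(2*s+1)))) =
          2*((2*k - i : ℕ):ℝ) * c k * t^(2*k) *
            ((2*s+1)^(2*k-(i+1)) * iteratedDeriv k h u) +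
          c k * t^(2*(k+1)) * ((2*s+1)^(2*(k+1)-(i+1)) * iteratedDeriv (k+1) h u) := by
        intro k _
        by_cases hck : c k = 0
        · simp [hck]
        · have h1 := (hc k hck).1
          have e1 : 2*(k+1) - (i+1) = (2*k - i) + 1 := by omega
          have e2 : 2*k - i - 1 = 2*k - (i+1) := by omega
          rw [e1, e2, pow_succ]
          ring
      have hr : ∑ k ∈ Finset.range (i+1+1),
            (2*((2*k - i : ℕ):ℝ) * c k + (if k = 0 then 0 else c (k-1))) * t^(2*k) *
              ((2*s+1)^(2*k-(i+1)) * iteratedDeriv k h u) =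
          (∑ k ∈ Finset.range (i+1), 2*((2*k - i : ℕ):ℝ) * c k * t^(2*k) *
              ((2*s+1)^(2*k-(i+1)) * iteratedDeriv k h u)) +
          ∑ k ∈ Finset.range (i+1), c k * t^(2*(k+1)) *
              ((2*s+1)^(2*(k+1)-(i+1)) * iteratedDeriv (k+1) h u) := by
        rw [Finset.sum_congr rfl (g := fun k =>
            2*((2*k - i : ℕ):ℝ) * c k * t^(2*k) *
              ((2*s+1)^(2*k-(i+1)) * iteratedDeriv k h u) +
            (if k = 0 then 0 else c (k-1)) * t^(2*k) *
              ((2*s+1)^(2*k-(i+1)) * iteratedDeriv k h u))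
          (fun k _ => by ring), Finset.sum_add_distrib,
          Finset.sum_range_succ, Finset.sum_range_succ']
        simp [hci1]
        rw [Finset.sum_range_succ']
        simp
      rw [hr, Finset.sum_congr rfl hsplit, Finset.sum_add_distrib]

theorem stmt9 (r : ℕ) (f₀ : SchwartzMap ℝ ℝ) (f : ℝ → ℝ)
    (hf : ∀ s : ℝ, f s = s ^ r * f₀ s) :
    ∀ i : ℕ, ∃ Ci : ℝ, ∀ t : ℝ, 0 < t → ∀ s : ℝ, 1 ≤ s →
      |iteratedDeriv i (fun s' : ℝ => (f (t ^ 2 * (s' * (s' + 1)))) ^ 2) s| ≤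
        Ci * t ^ (4 * r) * s ^ (4 * (r : ℝ) - (i : ℝ)) := by
  intro i
  have hsm : ContDiff ℝ (⊤:ℕ∞) (fun x : ℝ => x ^ (2*r) * (f₀ x * f₀ x)) :=
    (contDiff_id.pow _).mul ((f₀.smooth ⊤).mul (f₀.smooth ⊤))
  obtain ⟨c, hc, heq⟩ := struct (fun x : ℝ => x ^ (2*r) * (f₀ x * f₀ x)) hsm i
  choose D hD0 hD using fun k : ℕ => derivh_bound r f₀ k
  refine ⟨∑ k ∈ Finset.range (i+1), |c k| * 3^(2*k) * (2:ℝ)^(2*r) * D k,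
    fun t ht s hs => ?_⟩
  have hs0 : (0:ℝ) < s := lt_of_lt_of_le one_pos hs
  have hfun : (fun s' : ℝ => (f (t ^ 2 * (s' * (s' + 1)))) ^ 2) =
      fun s' : ℝ => (fun x : ℝ => x ^ (2*r) * (f₀ x * f₀ x)) (t^2 * (s' * (s'+1))) := by
    funext x
    rw [hf]
    ring
  rw [hfun, heq t s]
  set u := t^2 * (s*(s+1)) with hu
  have hu0 : 0 < u := by
    rw [hu]; positivity
  have hts : (0:ℝ) < t*s := mul_pos ht hs0
  have hterm : ∀ k ∈ Finset.range (i+1),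
      |c k * t^(2*k) * ((2*s+1)^(2*k-i) *
          iteratedDeriv k (fun x : ℝ => x ^ (2*r) * (f₀ x * f₀ x)) u)| ≤
      (|c k| * 3^(2*k) * (2:ℝ)^(2*r) * D k) * (t ^ (4*r) * s ^ (4 * (r:ℝ) - (i:ℝ))) := by
    intro k hk
    by_cases hck : c k = 0
    · simp [hck]
    · obtain ⟨h1, h2⟩ := hc k hck
      have h2s : (0:ℝ) < 2*s+1 := by linarith
      have habs : |c k * t^(2*k) * ((2*s+1)^(2*k-i) *
          iteratedDeriv k (fun x : ℝ => x ^ (2*r) * (f₀ x * f₀ x)) u)| =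
          |c k| * t^(2*k) * ((2*s+1)^(2*k-i) *
          |iteratedDeriv k (fun x : ℝ => x ^ (2*r) * (f₀ x * f₀ x)) u|) := by
        rw [abs_mul, abs_mul, abs_mul, abs_of_pos (pow_pos ht _), abs_of_pos (pow_pos h2s _)]
      have e1 : ((2*k - i : ℕ):ℝ) = 2*(k:ℝ) - i := by
        rw [Nat.cast_sub h1]; push_cast; ring
      have hα : u ^ (2*(r:ℝ) - k) ≤ 2^(2*r) * ((t*s)^2) ^ (2*(r:ℝ) - k) := by
        rcases le_or_gt 0 (2*(r:ℝ) - k) with hge | hlt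
        · have hub : u ≤ 2 * (t*s)^2 := by nlinarith [sq_nonneg t, mul_pos ht ht]
          calc u ^ (2*(r:ℝ) - k) ≤ (2 * (t*s)^2) ^ (2*(r:ℝ) - k) :=
                rpow_le_rpow hu0.le hub hge
            _ = 2 ^ (2*(r:ℝ) - k) * ((t*s)^2) ^ (2*(r:ℝ) - k) :=
                mul_rpow (by norm_num) (by positivity)
            _ ≤ 2^(2*r) * ((t*s)^2) ^ (2*(r:ℝ) - k) := by
                apply mul_le_mul_of_nonneg_right _ (by positivity)
                rw [← rpow_natCast (2:ℝ) (2*r)]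
                apply rpow_le_rpow_of_exponent_le (by norm_num)
                push_cast
                have : (0:ℝ) ≤ (k:ℝ) := Nat.cast_nonneg k
                linarith
        · have hlb : (t*s)^2 ≤ u := by nlinarith [mul_pos (mul_pos ht ht) hs0]
          calc u ^ (2*(r:ℝ) - k) ≤ ((t*s)^2) ^ (2*(r:ℝ) - k) :=
              rpow_le_rpow_of_nonpos (by positivity) hlb hlt.le
            _ ≤ 2^(2*r) * ((t*s)^2) ^ (2*(r:ℝ) - k) := by
              apply le_mul_of_one_le_left (by positivity)
              exact one_le_pow₀ (by norm_num : (1:ℝ) ≤ 2)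
      have hexp : t^(2*k) * s^(2*k-i) * ((t*s)^2) ^ (2*(r:ℝ) - k) =
          t^(4*r) * s^(4 * (r:ℝ) - (i:ℝ)) := by
        rw [← rpow_natCast t (2*k), ← rpow_natCast s (2*k-i), ← rpow_natCast (t*s) 2,
          ← rpow_mul hts.le, mul_rpow ht.le hs0.le, e1]
        rw [show t ^ ((2*k:ℕ):ℝ) * s ^ (2*(k:ℝ) - i) *
            (t ^ (((2:ℕ):ℝ) * (2*(r:ℝ) - k)) * s ^ (((2:ℕ):ℝ) * (2*(r:ℝ) - k))) =
            (t ^ ((2*k:ℕ):ℝ) * t ^ (((2:ℕ):ℝ) * (2*(r:ℝ) - k))) *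
            (s ^ (2*(k:ℝ) - i) * s ^ (((2:ℕ):ℝ) * (2*(r:ℝ) - k))) from by ring,
          ← rpow_add ht, ← rpow_add hs0]
        congr 1
        · rw [show ((2*k:ℕ):ℝ) + ((2:ℕ):ℝ) * (2*(r:ℝ) - k) = ((4*r:ℕ):ℝ) from by
            push_cast; ring, rpow_natCast]
        · congr 1
          push_cast
          ring
      rw [habs]
      calc |c k| * t^(2*k) * ((2*s+1)^(2*k-i) *
            |iteratedDeriv k (fun x : ℝ => x ^ (2*r) * (f₀ x * f₀ x)) u|)
          ≤ |c k| * t^(2*k) * ((3*s)^(2*k-i) * (D k * u ^ (2*(r:ℝ)-k))) := by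
            apply mul_le_mul_of_nonneg_left _ (by positivity)
            exact mul_le_mul (pow_le_pow_left₀ h2s.le (by linarith) _) (hD k u hu0)
              (abs_nonneg _) (by positivity)
        _ = (|c k| * D k) * (3^(2*k-i) * (t^(2*k) * s^(2*k-i) * u^(2*(r:ℝ)-k))) := by
            rw [mul_pow]; ring
        _ ≤ (|c k| * D k) * (3^(2*k) * (t^(2*k) * s^(2*k-i) *
              (2^(2*r) * ((t*s)^2) ^ (2*(r:ℝ)-k)))) := by
            apply mul_le_mul_of_nonneg_left _ (mul_nonneg (abs_nonneg _) (hD0 k))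
            apply mul_le_mul (pow_le_pow_right₀ (by norm_num) (Nat.sub_le _ _))
              (mul_le_mul_of_nonneg_left hα (by positivity))
              (mul_nonneg (by positivity) (rpow_nonneg hu0.le _)) (by positivity)
        _ = (|c k| * 3^(2*k) * (2:ℝ)^(2*r) * D k) *
              (t^(2*k) * s^(2*k-i) * ((t*s)^2) ^ (2*(r:ℝ)-k)) := by ring
        _ = _ := by rw [hexp]
  calc |∑ k ∈ Finset.range (i+1), c k * t^(2*k) * ((2*s+1)^(2*k-i) *
        iteratedDeriv k (fun x : ℝ => x ^ (2*r) * (f₀ x * f₀ x)) u)|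
      ≤ ∑ k ∈ Finset.range (i+1), |c k * t^(2*k) * ((2*s+1)^(2*k-i) *
        iteratedDeriv k (fun x : ℝ => x ^ (2*r) * (f₀ x * f₀ x)) u)| :=
        Finset.abs_sum_le_sum_abs _ _
    _ ≤ ∑ k ∈ Finset.range (i+1), (|c k| * 3^(2*k) * (2:ℝ)^(2*r) * D k) *
          (t ^ (4*r) * s ^ (4 * (r:ℝ) - (i:ℝ))) := Finset.sum_le_sum hterm
    _ = _ := by rw [← Finset.sum_mul, ← mul_assoc]
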